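/- arXiv:1803.11275 — 5 statements merged into one kernel-verified Lean document; each statement's English description precedes it below -/
import Mathlib

section
/- Let G be a simple graph on n vertices with walk matrix W, and let W̄ be the walk matrix of the complement Ḡ (with the same vertex ordering). For every k with 1 ≤ k ≤ n, let W_k and W̄_k denote the k×k leading principal (top-left) submatrices of W and W̄ respectively. Then det(W̄_k) = (−1)^{k(k−1)/2} · det(W_k). -/
open Matrix

open scoped Classical in
/-- The 0/1 adjacency matrix of a simple graph, over the integers. -/
noncomputable def adjMat {V : Type*} [Fintype V] (G : SimpleGraph V) : Matrix V V ℤ :=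
  Matrix.of fun u v => if G.Adj u v then (1 : ℤ) else 0

/-- The walk matrix of a simple graph on `Fin n`: its `j`-th column is ``A^j e``
where `e` is the all-ones vector. -/
noncomputable def walkMat {n : ℕ} (G : SimpleGraph (Fin n)) : Matrix (Fin n) (Fin n) ℤ :=
  Matrix.of fun i j => ((adjMat G ^ (j : ℕ)) *ᵥ fun _ => (1 : ℤ)) i

/-- `G ∪ w`: adjoin a new vertex (labelled `0`) adjacent to no vertex of `G`;
the original vertex `i` of `G` becomes `i.succ`. -/
def unionVertex {n : ℕ} (G : SimpleGraph (Fin n)) : SimpleGraph (Fin (n + 1)) where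
  Adj u v := ∃ i j : Fin n, u = i.succ ∧ v = j.succ ∧ G.Adj i j
  symm := by
    constructor
    rintro u v ⟨i, j, hu, hv, h⟩
    exact ⟨j, i, hv, hu, h.symm⟩
  loopless := by
    constructor
    rintro u ⟨i, j, rfl, hv, h⟩
    obtain rfl : i = j := Fin.succ_inj.mp hv
    exact G.loopless.irrefl i h

/-- `G ∨ w`: adjoin a new vertex (labelled `0`) adjacent to every vertex of `G`;
the original vertex `i` of `G` becomes `i.succ`. -/
def joinVertex {n : ℕ} (G : SimpleGraph (Fin n)) : SimpleGraph (Fin (n + 1)) where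
  Adj u v := (u = 0 ∧ v ≠ 0) ∨ (v = 0 ∧ u ≠ 0) ∨
    ∃ i j : Fin n, u = i.succ ∧ v = j.succ ∧ G.Adj i j
  symm := by
    constructor
    rintro u v (⟨h1, h2⟩ | ⟨h1, h2⟩ | ⟨i, j, hu, hv, h⟩)
    · exact Or.inr (Or.inl ⟨h1, h2⟩)
    · exact Or.inl ⟨h1, h2⟩
    · exact Or.inr (Or.inr ⟨j, i, hv, hu, h.symm⟩)
  loopless := by
    constructor
    rintro u (⟨h1, h2⟩ | ⟨h1, h2⟩ | ⟨i, j, rfl, hv, h⟩)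
    · exact h2 h1
    · exact h2 h1
    · obtain rfl : i = j := Fin.succ_inj.mp hv
      exact G.loopless.irrefl i h

/-- The sequence `G₀, G₁, G₂, …` where `Gᵢ = G_{i-1} ∪ wᵢ` for odd `i` and
`Gᵢ = G_{i-1} ∨ wᵢ` for even `i ≥ 2`. -/
def seqGraph {n0 : ℕ} (G0 : SimpleGraph (Fin n0)) : (i : ℕ) → SimpleGraph (Fin (n0 + i))
  | 0 => G0
  | (i + 1) => if (i + 1) % 2 = 1 then unionVertex (seqGraph G0 i) else joinVertex (seqGraph G0 i)

/-- A graph is determined by its generalized spectrum. -/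
def IsDGS {n : ℕ} (G : SimpleGraph (Fin n)) : Prop :=
  ∀ H : SimpleGraph (Fin n),
    (adjMat H).charpoly = (adjMat G).charpoly →
    (adjMat Hᶜ).charpoly = (adjMat Gᶜ).charpoly →
    Nonempty (H ≃g G)

open Finset

noncomputable def wcoef {n : ℕ} (G : SimpleGraph (Fin n)) : ℕ → ℕ → ℤ
  | 0, m => if m = 0 then 1 else 0
  | (j+1), m =>
      (if m = 0 then (∑ i, ((adjMat Gᶜ ^ j) *ᵥ (fun _ => (1:ℤ))) i) else 0)
        - wcoef G j m - (if m = 0 then 0 else wcoef G j (m-1))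

lemma wcoef_eq_zero {n : ℕ} (G : SimpleGraph (Fin n)) : ∀ j m, j < m → wcoef G j m = 0 := by
  intro j
  induction j with
  | zero => intro m hm; simp [wcoef]; omega
  | succ j ih =>
    intro m hm
    have h0 : m ≠ 0 := by omega
    simp only [wcoef, h0, if_neg h0, ite_false]
    rw [ih m (by omega), ih (m-1) (by omega)]
    ring

lemma wcoef_diag {n : ℕ} (G : SimpleGraph (Fin n)) : ∀ j, wcoef G j j = (-1)^j := by
  intro j
  induction j with
  | zero => simp [wcoef]
  | succ j ih =>
    simp only [wcoef, Nat.succ_ne_zero, if_neg, ite_false, Nat.add_sub_cancel]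
    rw [wcoef_eq_zero G j (j+1) (by omega), ih]
    ring

open scoped Classical in
lemma adjMat_compl {n : ℕ} (G : SimpleGraph (Fin n)) :
    adjMat Gᶜ = (Matrix.of fun _ _ => (1:ℤ)) - 1 - adjMat G := by
  ext u v
  simp only [adjMat, Matrix.of_apply, Matrix.sub_apply, Matrix.one_apply,
    SimpleGraph.compl_adj]
  by_cases h : u = v
  · subst h; simp [G.loopless.irrefl u]
  · by_cases ha : G.Adj u v
    · simp [h, ha]
    · simp [h, ha, Ne.symm h]

lemma key {n : ℕ} (G : SimpleGraph (Fin n)) : ∀ j,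
    (adjMat Gᶜ ^ j) *ᵥ (fun _ => (1:ℤ)) =
      ∑ m ∈ range (j+1), wcoef G j m • ((adjMat G ^ m) *ᵥ fun _ => (1:ℤ)) := by
  intro j
  induction j with
  | zero => simp [wcoef]
  | succ j ih =>
    set e : Fin n → ℤ := fun _ => (1:ℤ) with he
    set v : Fin n → ℤ := (adjMat Gᶜ ^ j) *ᵥ e with hv
    set s : ℤ := ∑ i, v i with hs
    have h1 : (adjMat Gᶜ ^ (j+1)) *ᵥ e = adjMat Gᶜ *ᵥ v := by
      rw [hv, Matrix.mulVec_mulVec, ← pow_succ']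
    have hJ : (Matrix.of fun _ _ => (1:ℤ)) *ᵥ v = s • e := by
      funext i
      simp [Matrix.mulVec, dotProduct, hs, he]
    have hA : adjMat G *ᵥ v =
        ∑ m ∈ range (j+1), wcoef G j m • ((adjMat G ^ (m+1)) *ᵥ e) := by
      rw [ih]
      rw [show (adjMat G *ᵥ ∑ m ∈ range (j+1), wcoef G j m • ((adjMat G ^ m) *ᵥ e))
          = (adjMat G).mulVecLin (∑ m ∈ range (j+1), wcoef G j m • ((adjMat G ^ m) *ᵥ e)) from rfl]
      rw [map_sum]
      refine Finset.sum_congr rfl fun m _ => ?_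
      rw [_root_.map_smul]
      simp only [Matrix.mulVecLin_apply, Matrix.mulVec_mulVec, ← pow_succ']
    have h2 : adjMat Gᶜ *ᵥ v = s • e - v - adjMat G *ᵥ v := by
      rw [adjMat_compl, Matrix.sub_mulVec, Matrix.sub_mulVec, Matrix.one_mulVec, hJ]
    rw [h1, h2, hA]
    have hw : ∀ m, wcoef G (j+1) m =
        (if m = 0 then s else 0) - wcoef G j m - (if m = 0 then 0 else wcoef G j (m-1)) := by
      intro m
      rw [hs, hv, he]
      simp only [wcoef]
    simp only [hw, sub_smul]
    rw [Finset.sum_sub_distrib, Finset.sum_sub_distrib]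
    congr 1
    congr 1
    · -- ∑ (if m=0 then s else 0) • A^m e = s • e
      rw [Finset.sum_eq_single_of_mem 0 (by simp)]
      · simp
      · intro b _ hb; simp [hb]
    · -- drop last term
      rw [Finset.sum_range_succ, wcoef_eq_zero G j (j+1) (by omega), zero_smul, add_zero]
      exact ih
    · -- shift
      conv_rhs => rw [Finset.sum_range_succ']
      simp

/-- the leading principal `k × k` submatrices of the walk matrices of `G`
and its complement satisfy det(W̄ₖ) = (−1)^{k(k−1)/2} · det(Wₖ). -/
theorem det_walkMat_compl_leading_principal {n : ℕ} (G : SimpleGraph (Fin n))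
    (k : ℕ) (hk1 : 1 ≤ k) (hkn : k ≤ n) :
    ((walkMat Gᶜ).submatrix (Fin.castLE hkn) (Fin.castLE hkn)).det =
      (-1 : ℤ) ^ (k * (k - 1) / 2) *
        ((walkMat G).submatrix (Fin.castLE hkn) (Fin.castLE hkn)).det := by
  set U : Matrix (Fin k) (Fin k) ℤ := Matrix.of fun i j => wcoef G j i with hU
  have hfac : (walkMat Gᶜ).submatrix (Fin.castLE hkn) (Fin.castLE hkn)
      = (walkMat G).submatrix (Fin.castLE hkn) (Fin.castLE hkn) * U := by
    ext i j
    have hL : walkMat Gᶜ (Fin.castLE hkn i) (Fin.castLE hkn j)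
        = ∑ m ∈ range ((j:ℕ)+1),
            wcoef G j m * ((adjMat G ^ m) *ᵥ fun _ => (1:ℤ)) (Fin.castLE hkn i) := by
      show ((adjMat Gᶜ ^ ((Fin.castLE hkn j : Fin n):ℕ)) *ᵥ fun _ => (1:ℤ)) (Fin.castLE hkn i) = _
      rw [show ((Fin.castLE hkn j : Fin n):ℕ) = (j:ℕ) from rfl, key G j]
      simp [Finset.sum_apply]
    have hR : ∑ m : Fin k, walkMat G (Fin.castLE hkn i) (Fin.castLE hkn m) * wcoef G j m
        = ∑ m ∈ range k, ((adjMat G ^ m) *ᵥ fun _ => (1:ℤ)) (Fin.castLE hkn i) * wcoef G j m := by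
      rw [← Fin.sum_univ_eq_sum_range
        (fun m => ((adjMat G ^ m) *ᵥ fun _ => (1:ℤ)) (Fin.castLE hkn i) * wcoef G j m) k]
      rfl
    simp only [Matrix.submatrix_apply, Matrix.mul_apply, hU, Matrix.of_apply]
    rw [hL, hR]
    rw [Finset.sum_subset (Finset.range_subset_range.mpr j.isLt)]
    · exact Finset.sum_congr rfl fun m _ => mul_comm _ _
    · intro m _ hm
      rw [wcoef_eq_zero G j m (by simpa using hm)]
      ring
  have hUtri : U.BlockTriangular id := by
    intro i j hij
    exact wcoef_eq_zero G j i hij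
  have hdetU : U.det = (-1:ℤ) ^ (k * (k-1) / 2) := by
    rw [Matrix.det_of_upperTriangular hUtri]
    have : ∀ i : Fin k, U i i = (-1:ℤ)^(i:ℕ) := fun i => wcoef_diag G i
    rw [Finset.prod_congr rfl fun i _ => this i, Finset.prod_pow_eq_pow_sum,
      Fin.sum_univ_eq_sum_range (fun m => m) k, Finset.sum_range_id]
  rw [hfac, Matrix.det_mul, hdetU, mul_comm]
end

section
/- Let G be a simple graph on n vertices with adjacency matrix A and walk matrix W, and let G ∪ w be the graph on n+1 vertices obtained from G by adding a new isolated vertex w. If the vertices of G ∪ w are ordered with w first, followed by the vertices of G in their original order, then det(W(G ∪ w)) = det(A) · det(W). -/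
open Matrix

lemma adjMat_unionVertex_zero {n : ℕ} (G : SimpleGraph (Fin n)) (v : Fin (n + 1)) :
    adjMat (unionVertex G) 0 v = 0 := by
  simp only [adjMat, Matrix.of_apply]
  rw [if_neg]
  rintro ⟨i, j, hi, -, -⟩
  exact (Fin.succ_ne_zero i) hi.symm

lemma adjMat_unionVertex_succ_zero {n : ℕ} (G : SimpleGraph (Fin n)) (i : Fin n) :
    adjMat (unionVertex G) i.succ 0 = 0 := by
  simp only [adjMat, Matrix.of_apply]
  rw [if_neg]
  rintro ⟨a, b, -, hb, -⟩
  exact (Fin.succ_ne_zero b) hb.symm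

lemma adjMat_unionVertex_succ_succ {n : ℕ} (G : SimpleGraph (Fin n)) (i j : Fin n) :
    adjMat (unionVertex G) i.succ j.succ = adjMat G i j := by
  simp only [adjMat, Matrix.of_apply]
  congr 1
  simp only [eq_iff_iff]
  constructor
  · rintro ⟨a, b, ha, hb, h⟩
    obtain rfl : i = a := Fin.succ_inj.mp ha
    obtain rfl : j = b := Fin.succ_inj.mp hb
    exact h
  · intro h; exact ⟨i, j, rfl, rfl, h⟩

lemma pow_mulVec_unionVertex {n : ℕ} (G : SimpleGraph (Fin n)) (j : ℕ) :
    ((adjMat (unionVertex G)) ^ j) *ᵥ (fun _ => (1 : ℤ)) =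
      Fin.cons (if j = 0 then 1 else 0) (((adjMat G) ^ j) *ᵥ (fun _ => 1)) := by
  induction j with
  | zero =>
    funext v
    induction v using Fin.cases <;> simp [Matrix.one_mulVec]
  | succ j ih =>
    rw [pow_succ', ← Matrix.mulVec_mulVec, ih]
    funext v
    induction v using Fin.cases with
    | zero =>
      simp [Matrix.mulVec, dotProduct, adjMat_unionVertex_zero]
    | succ i =>
      rw [pow_succ', ← Matrix.mulVec_mulVec]
      simp only [Matrix.mulVec, dotProduct, Fin.sum_univ_succ,
        adjMat_unionVertex_succ_zero, adjMat_unionVertex_succ_succ, Fin.cons_zero,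
        Fin.cons_succ, zero_mul, zero_add, Fin.cons_succ, if_neg (Nat.succ_ne_zero j)]

lemma walkMat_unionVertex_submatrix {n : ℕ} (G : SimpleGraph (Fin n)) :
    (walkMat (unionVertex G)).submatrix Fin.succ Fin.succ = adjMat G * walkMat G := by
  funext i j
  simp only [Matrix.submatrix_apply, walkMat, Matrix.of_apply,
    pow_mulVec_unionVertex, Fin.cons_succ, Fin.val_succ]
  rw [pow_succ', ← Matrix.mulVec_mulVec]
  simp [Matrix.mul_apply, Matrix.mulVec, dotProduct, walkMat]

/-- with the new isolated vertex `w` listed first,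
det(W(G ∪ w)) = det(A) · det(W). -/
theorem det_walkMat_unionVertex {n : ℕ} (G : SimpleGraph (Fin n)) :
    (walkMat (unionVertex G)).det = (adjMat G).det * (walkMat G).det := by
  have h0 : ∀ j : Fin (n + 1), walkMat (unionVertex G) 0 j =
      if (j : ℕ) = 0 then 1 else 0 := by
    intro j
    simp [walkMat, pow_mulVec_unionVertex]
  rw [Matrix.det_succ_row_zero]
  rw [Fin.sum_univ_succ]
  have hz : ∀ j : Fin n, walkMat (unionVertex G) 0 j.succ = 0 := by
    intro j
    rw [h0]
    simp
  simp only [hz, mul_zero, zero_mul, Finset.sum_const_zero, add_zero]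
  rw [h0]
  simp only [Fin.val_zero, if_pos rfl, pow_zero, one_mul, Fin.succAbove_zero]
  rw [walkMat_unionVertex_submatrix, Matrix.det_mul, if_pos trivial, one_mul]
end

section
/- Let G be a simple graph on n vertices with walk matrix W, let Ḡ be its complement with adjacency matrix Ā, and let G ∨ w be the graph on n+1 vertices obtained from G by adding a new vertex w adjacent to every vertex of G. Then |det(W(G ∨ w))| = |det(Ā)| · |det(W)|. -/
open Matrix

namespace WalkAux
open Finset
variable {n : ℕ}

noncomputable def av (G : SimpleGraph (Fin n)) : ℕ → ℤ × (Fin n → ℤ)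
  | 0 => (1, fun _ => 1)
  | (j+1) => (∑ i, (av G j).2 i, (fun _ => (av G j).1) + adjMat G *ᵥ (av G j).2)

noncomputable def aa (G : SimpleGraph (Fin n)) (j : ℕ) : ℤ := (av G j).1
noncomputable def vv (G : SimpleGraph (Fin n)) (j : ℕ) : Fin n → ℤ := (av G j).2

lemma aa_zero (G : SimpleGraph (Fin n)) : aa G 0 = 1 := rfl
lemma vv_zero (G : SimpleGraph (Fin n)) : vv G 0 = fun _ => 1 := rfl
lemma aa_succ (G : SimpleGraph (Fin n)) (j : ℕ) : aa G (j+1) = ∑ i, vv G j i := rfl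
lemma vv_succ (G : SimpleGraph (Fin n)) (j : ℕ) :
    vv G (j+1) = (fun _ => aa G j) + adjMat G *ᵥ vv G j := rfl

noncomputable def cc (G : SimpleGraph (Fin n)) (k : ℕ) : ℤ := (adjMat G).charpoly.coeff k

noncomputable def ss (G : SimpleGraph (Fin n)) : ℕ → ℤ
  | 0 => 1
  | (j+1) => cc G (n - 1 - j) - ∑ d ∈ Finset.range (j+1), aa G d * ss G (j - d)
  decreasing_by exact Nat.lt_succ_of_le (Nat.sub_le _ _)

lemma ss_zero (G : SimpleGraph (Fin n)) : ss G 0 = 1 := by rw [ss]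
lemma ss_succ (G : SimpleGraph (Fin n)) (j : ℕ) :
    ss G (j+1) = cc G (n - 1 - j) - ∑ d ∈ Finset.range (j+1), aa G d * ss G (j - d) := by rw [ss]

noncomputable def ttau (G : SimpleGraph (Fin n)) : ℤ :=
  ∑ j ∈ Finset.range (n+1), aa G j * ss G (n - j)

/-! Adjacency entries of the join. -/

lemma adj_join_zero_zero (G : SimpleGraph (Fin n)) : adjMat (joinVertex G) 0 0 = 0 := by
  simp only [adjMat, Matrix.of_apply]
  rw [if_neg]; exact (joinVertex G).irrefl

lemma adj_join_zero_succ (G : SimpleGraph (Fin n)) (i : Fin n) :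
    adjMat (joinVertex G) 0 i.succ = 1 := by
  simp only [adjMat, Matrix.of_apply]
  rw [if_pos]; exact Or.inl ⟨rfl, (Fin.succ_ne_zero i)⟩

lemma adj_join_succ_zero (G : SimpleGraph (Fin n)) (i : Fin n) :
    adjMat (joinVertex G) i.succ 0 = 1 := by
  simp only [adjMat, Matrix.of_apply]
  rw [if_pos]; exact Or.inr (Or.inl ⟨rfl, (Fin.succ_ne_zero i)⟩)

lemma adj_join_succ_succ (G : SimpleGraph (Fin n)) (i j : Fin n) :
    adjMat (joinVertex G) i.succ j.succ = adjMat G i j := by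
  simp only [adjMat, Matrix.of_apply]
  by_cases h : G.Adj i j
  · rw [if_pos, if_pos h]; exact Or.inr (Or.inr ⟨i, j, rfl, rfl, h⟩)
  · rw [if_neg, if_neg h]
    rintro (⟨h1, _⟩ | ⟨h1, _⟩ | ⟨i', j', hi, hj, hadj⟩)
    · exact (Fin.succ_ne_zero i) h1
    · exact (Fin.succ_ne_zero j) h1
    · obtain rfl : i = i' := Fin.succ_inj.mp hi
      obtain rfl : j = j' := Fin.succ_inj.mp hj
      exact h hadj

lemma pow_mulVec_one (G : SimpleGraph (Fin n)) (j : ℕ) :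
    (adjMat (joinVertex G)) ^ j *ᵥ (fun _ => (1:ℤ)) = Fin.cons (aa G j) (vv G j) := by
  induction j with
  | zero =>
      rw [pow_zero, Matrix.one_mulVec]
      funext u
      refine Fin.cases ?_ (fun i => ?_) u
      · simp [aa_zero]
      · simp [vv_zero]
  | succ j ih =>
      rw [pow_succ', ← Matrix.mulVec_mulVec, ih]
      funext u
      refine Fin.cases ?_ (fun i => ?_) u
      · rw [Fin.cons_zero, aa_succ]
        simp only [Matrix.mulVec, dotProduct, Fin.sum_univ_succ, Fin.cons_zero, Fin.cons_succ,
          adj_join_zero_zero, adj_join_zero_succ, zero_mul, one_mul, zero_add]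
      · rw [Fin.cons_succ, vv_succ]
        simp only [Matrix.mulVec, dotProduct, Fin.sum_univ_succ, Fin.cons_zero, Fin.cons_succ,
          adj_join_succ_zero, adj_join_succ_succ, one_mul, Pi.add_apply]

lemma walk_join_apply (G : SimpleGraph (Fin n)) (i j : Fin (n+1)) :
    walkMat (joinVertex G) i j = (Fin.cons (aa G (j:ℕ)) (vv G (j:ℕ)) : Fin (n+1) → ℤ) i := by
  show ((adjMat (joinVertex G) ^ (j:ℕ)) *ᵥ fun _ => (1:ℤ)) i = _
  rw [pow_mulVec_one]

end WalkAux
namespace WalkAux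
open Finset
variable {n : ℕ}

lemma mulVec_sum {ι : Type*} (A : Matrix (Fin n) (Fin n) ℤ) (s : Finset ι)
    (f : ι → Fin n → ℤ) : A *ᵥ (∑ k ∈ s, f k) = ∑ k ∈ s, A *ᵥ (f k) := by
  simp only [← Matrix.mulVecLin_apply, map_sum]

lemma mulVec_smulZ (A : Matrix (Fin n) (Fin n) ℤ) (c : ℤ) (x : Fin n → ℤ) :
    A *ᵥ (c • x) = c • (A *ᵥ x) := by
  simp only [← Matrix.mulVecLin_apply]
  exact map_smul A.mulVecLin c x

lemma sum_mulVecZ {ι : Type*} (s : Finset ι) (f : ι → Matrix (Fin n) (Fin n) ℤ)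
    (v : Fin n → ℤ) : (∑ k ∈ s, f k) *ᵥ v = ∑ k ∈ s, (f k) *ᵥ v := by
  funext i
  simp only [Matrix.mulVec, dotProduct, Finset.sum_apply, Matrix.sum_apply, Finset.sum_mul]
  exact Finset.sum_comm

lemma v_eq (G : SimpleGraph (Fin n)) (j : ℕ) :
    vv G j = (adjMat G ^ j) *ᵥ (fun _ => (1:ℤ))
      + ∑ k ∈ range j, aa G (j-1-k) • ((adjMat G ^ k) *ᵥ (fun _ => (1:ℤ))) := by
  induction j with
  | zero => simp [vv_zero]
  | succ j ih =>
      rw [vv_succ, ih, Matrix.mulVec_add, mulVec_sum]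
      rw [Finset.sum_range_succ' (fun k => aa G (j+1-1-k) • ((adjMat G ^ k) *ᵥ (fun _ => (1:ℤ))))]
      have h1 : ∀ k : ℕ, adjMat G *ᵥ ((adjMat G ^ k) *ᵥ (fun _ => (1:ℤ)))
          = (adjMat G ^ (k+1)) *ᵥ (fun _ => (1:ℤ)) := by
        intro k; rw [Matrix.mulVec_mulVec, ← pow_succ']
      have h2 : (fun _ => aa G j) = aa G (j+1-1-0) • ((adjMat G ^ 0) *ᵥ (fun _ => (1:ℤ))) := by
        funext i; simp
      have h3 : ∀ k : ℕ, adjMat G *ᵥ (aa G (j-1-k) • ((adjMat G ^ k) *ᵥ (fun _ => (1:ℤ))))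
          = aa G (j+1-1-(k+1)) • ((adjMat G ^ (k+1)) *ᵥ (fun _ => (1:ℤ))) := by
        intro k
        rw [mulVec_smulZ, h1]
        congr 2
        omega
      simp_rw [h3]
      rw [h1 j, h2]
      abel

lemma charpoly_sum (G : SimpleGraph (Fin n)) :
    adjMat G ^ n + ∑ k ∈ range n, cc G k • adjMat G ^ k = 0 := by
  have hd : (adjMat G).charpoly.natDegree = n := by
    rw [Matrix.charpoly_natDegree_eq_dim, Fintype.card_fin]
  have h := Matrix.aeval_self_charpoly (adjMat G)
  rw [Polynomial.aeval_eq_sum_range, hd, Finset.sum_range_succ] at h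
  have hc : (adjMat G).charpoly.coeff n = 1 := by
    have := (adjMat G).charpoly_monic.coeff_natDegree
    rwa [hd] at this
  rw [hc, one_smul, add_comm] at h
  have hz : ∀ k ∈ range n, (adjMat G).charpoly.coeff k • adjMat G ^ k
      = cc G k • adjMat G ^ k := fun k _ => rfl
  rw [Finset.sum_congr rfl hz] at h
  exact h

lemma ch_vec (G : SimpleGraph (Fin n)) :
    (adjMat G ^ n) *ᵥ (fun _ => (1:ℤ))
      = - ∑ k ∈ range n, cc G k • ((adjMat G ^ k) *ᵥ (fun _ => (1:ℤ))) := by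
  have h := congrArg (fun M => M *ᵥ (fun _ => (1:ℤ))) (charpoly_sum G)
  simp only [Matrix.add_mulVec, Matrix.zero_mulVec, sum_mulVecZ] at h
  have hz : ∀ k ∈ range n, (cc G k • adjMat G ^ k) *ᵥ (fun _ => (1:ℤ))
      = cc G k • ((adjMat G ^ k) *ᵥ (fun _ => (1:ℤ))) := by
    intro k _; rw [Matrix.smul_mulVec]
  rw [Finset.sum_congr rfl hz] at h
  linear_combination (norm := module) h

noncomputable def Fv (G : SimpleGraph (Fin n)) (m : ℕ) : Fin n → ℤ :=
  ∑ j ∈ range (m+1), ss G (m-j) • vv G j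

lemma Fv_succ (G : SimpleGraph (Fin n)) (m : ℕ) :
    Fv G (m+1) = (fun _ => cc G (n-1-m)) + adjMat G *ᵥ Fv G m := by
  unfold Fv
  rw [Finset.sum_range_succ' (fun j => ss G (m+1-j) • vv G j)]
  simp only [Nat.succ_sub_succ, Nat.sub_zero]
  simp_rw [vv_succ, smul_add]
  rw [Finset.sum_add_distrib]
  have h2 : ∑ j ∈ range (m+1), ss G (m-j) • (adjMat G *ᵥ vv G j)
      = adjMat G *ᵥ ∑ j ∈ range (m+1), ss G (m-j) • vv G j := by
    rw [mulVec_sum]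
    exact Finset.sum_congr rfl fun j _ => (mulVec_smulZ _ _ _).symm
  rw [h2]
  have h3 : (∑ j ∈ range (m+1), ss G (m-j) • (fun _ => aa G j : Fin n → ℤ))
      + ss G (m+1) • vv G 0 = (fun _ => cc G (n-1-m)) := by
    funext i
    simp only [Finset.sum_apply, Pi.add_apply, Pi.smul_apply, smul_eq_mul, vv_zero,
      ss_succ, mul_one]
    have : ∑ j ∈ range (m+1), ss G (m-j) * aa G j
        = ∑ j ∈ range (m+1), aa G j * ss G (m-j) :=
      Finset.sum_congr rfl fun j _ => mul_comm _ _
    rw [this]; ring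
  rw [← h3]
  abel

lemma Fv_eq (G : SimpleGraph (Fin n)) (m : ℕ) (hm : m ≤ n) :
    Fv G m = (adjMat G ^ m) *ᵥ (fun _ => (1:ℤ))
      + ∑ d ∈ range m, cc G (n-m+d) • ((adjMat G ^ d) *ᵥ (fun _ => (1:ℤ))) := by
  induction m with
  | zero => simp [Fv, ss_zero, vv_zero]
  | succ m ih =>
      have hm' : m ≤ n := le_of_lt hm
      rw [Fv_succ, ih hm', Matrix.mulVec_add, mulVec_sum]
      have h1 : ∀ k : ℕ, adjMat G *ᵥ ((adjMat G ^ k) *ᵥ (fun _ => (1:ℤ)))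
          = (adjMat G ^ (k+1)) *ᵥ (fun _ => (1:ℤ)) := by
        intro k; rw [Matrix.mulVec_mulVec, ← pow_succ']
      rw [Finset.sum_range_succ' (fun d => cc G (n-(m+1)+d) • ((adjMat G ^ d) *ᵥ (fun _ => (1:ℤ))))]
      have h2 : (fun _ => cc G (n-1-m)) = cc G (n-(m+1)+0) • ((adjMat G ^ 0) *ᵥ (fun _ => (1:ℤ))) := by
        funext i
        simp only [pow_zero, Matrix.one_mulVec, Pi.smul_apply, smul_eq_mul, mul_one]
        congr 1
        omega
      have h3 : ∀ d ∈ range m, adjMat G *ᵥ (cc G (n-m+d) • ((adjMat G ^ d) *ᵥ (fun _ => (1:ℤ))))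
          = cc G (n-(m+1)+(d+1)) • ((adjMat G ^ (d+1)) *ᵥ (fun _ => (1:ℤ))) := by
        intro d _
        rw [mulVec_smulZ, h1]
        congr 2
        omega
      rw [Finset.sum_congr rfl h3, h1 m, h2]
      abel

lemma sum_ss_vv (G : SimpleGraph (Fin n)) :
    ∑ j ∈ range (n+1), ss G (n-j) • vv G j = 0 := by
  have h := Fv_eq G n le_rfl
  unfold Fv at h
  rw [ch_vec] at h
  rw [h]
  have hz : ∀ d ∈ range n, cc G (n-n+d) • ((adjMat G ^ d) *ᵥ (fun _ => (1:ℤ)))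
      = cc G d • ((adjMat G ^ d) *ᵥ (fun _ => (1:ℤ))) := by
    intro d _; congr 2; omega
  rw [Finset.sum_congr rfl hz]
  abel

end WalkAux
namespace WalkAux
open Finset
variable {n : ℕ}

noncomputable def colOp (p : ℕ) (q : Fin (p+1) → ℤ) : Matrix (Fin (p+1)) (Fin (p+1)) ℤ :=
  Matrix.of fun k j => if j = Fin.last p then q k else if k = j then 1 else 0

lemma colOp_blockTriangular (p : ℕ) (q : Fin (p+1) → ℤ) :
    (colOp p q).BlockTriangular id := by
  intro i j hij
  simp only [id] at hij
  have hj : j ≠ Fin.last p := by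
    rintro rfl
    exact (Fin.le_last i).not_gt hij
  simp only [colOp, Matrix.of_apply]
  rw [if_neg hj, if_neg (ne_of_gt hij)]

lemma colOp_det (p : ℕ) (q : Fin (p+1) → ℤ) (hq : q (Fin.last p) = 1) :
    (colOp p q).det = 1 := by
  rw [Matrix.det_of_upperTriangular (colOp_blockTriangular p q)]
  apply Finset.prod_eq_one
  intro i _
  simp only [colOp, Matrix.of_apply]
  by_cases h : i = Fin.last p
  · subst h; rw [if_pos rfl]; exact hq
  · rw [if_neg h]; simp

lemma mul_colOp_ne {p : ℕ} (M : Matrix (Fin (p+1)) (Fin (p+1)) ℤ) (q : Fin (p+1) → ℤ)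
    (i j : Fin (p+1)) (hj : j ≠ Fin.last p) : (M * colOp p q) i j = M i j := by
  rw [Matrix.mul_apply]
  have h : ∀ k, M i k * colOp p q k j = if k = j then M i k else 0 := by
    intro k
    simp only [colOp, Matrix.of_apply]
    rw [if_neg hj]
    split <;> simp
  simp_rw [h]
  simp

lemma mul_colOp_last {p : ℕ} (M : Matrix (Fin (p+1)) (Fin (p+1)) ℤ) (q : Fin (p+1) → ℤ)
    (i : Fin (p+1)) : (M * colOp p q) i (Fin.last p) = ∑ k, M i k * q k := by
  rw [Matrix.mul_apply]
  exact Finset.sum_congr rfl fun k _ => by simp [colOp]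

lemma helper_upper (p j : ℕ) (hj : j < p) (h g : ℕ → ℤ) :
    ∑ k ∈ range p, h k * (if k = j then 1 else if k < j then g k else 0)
      = h j + ∑ k ∈ range j, g k * h k := by
  have hsub : range (j+1) ⊆ range p := Finset.range_subset_range.mpr (Nat.succ_le_of_lt hj)
  rw [← Finset.sum_subset hsub ?_]
  · rw [Finset.sum_range_succ, if_pos rfl, mul_one]
    have hcong : ∀ k ∈ range j, h k * (if k = j then 1 else if k < j then g k else 0)
        = g k * h k := by
      intro k hk
      have hk' := Finset.mem_range.mp hk
      rw [if_neg (by omega), if_pos hk']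
      ring
    rw [Finset.sum_congr rfl hcong]
    ring
  · intro x _ hnx
    have hx : ¬ x < j + 1 := fun hh => hnx (Finset.mem_range.mpr hh)
    rw [if_neg (by omega), if_neg (by omega), mul_zero]

lemma helper_le (p j : ℕ) (hj : j < p) (f : ℕ → ℤ) :
    ∑ k ∈ range p, (if k ≤ j then f k else 0) = ∑ k ∈ range (j+1), f k := by
  have hsub : range (j+1) ⊆ range p := Finset.range_subset_range.mpr (Nat.succ_le_of_lt hj)
  rw [← Finset.sum_subset hsub ?_]
  · exact Finset.sum_congr rfl fun k hk =>
      if_pos (Nat.lt_succ_iff.mp (Finset.mem_range.mp hk))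
  · intro x _ hnx
    have hx : ¬ x < j + 1 := fun hh => hnx (Finset.mem_range.mpr hh)
    rw [if_neg (by omega)]

lemma helper_ge (p j : ℕ) (f : ℕ → ℤ) :
    ∑ k ∈ range p, (if j ≤ k then f k else 0) = ∑ k ∈ Finset.Ico j p, f k := by
  rw [Finset.range_eq_Ico]
  rw [← Finset.sum_subset (Finset.Ico_subset_Ico (Nat.zero_le j) le_rfl) ?_]
  · exact Finset.sum_congr rfl fun k hk => if_pos (Finset.mem_Ico.mp hk).1
  · intro x hx hnx
    have h1 := Finset.mem_Ico.mp hx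
    have h2 : ¬ (j ≤ x ∧ x < p) := fun hh => hnx (Finset.mem_Ico.mpr hh)
    rw [if_neg (by omega)]

noncomputable def Vmat (G : SimpleGraph (Fin n)) : Matrix (Fin n) (Fin n) ℤ :=
  Matrix.of fun i j => vv G (j:ℕ) i

noncomputable def U0 (G : SimpleGraph (Fin n)) : Matrix (Fin n) (Fin n) ℤ :=
  Matrix.of fun k j =>
    if (k:ℕ) = (j:ℕ) then 1 else if (k:ℕ) < (j:ℕ) then aa G ((j:ℕ)-1-(k:ℕ)) else 0

lemma U0_det (G : SimpleGraph (Fin n)) : (U0 G).det = 1 := by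
  have ht : (U0 G).BlockTriangular id := by
    intro i j hij
    simp only [id] at hij
    simp only [U0, Matrix.of_apply]
    have h1 : ¬ ((i:ℕ) = (j:ℕ)) := by
      intro hh; exact absurd (Fin.ext hh : i = j) (ne_of_gt hij)
    have h2 : ¬ ((i:ℕ) < (j:ℕ)) := by
      exact fun hh => absurd hij (not_lt_of_gt hh)
    rw [if_neg h1, if_neg h2]
  rw [Matrix.det_of_upperTriangular ht]
  apply Finset.prod_eq_one
  intro i _
  simp [U0]

lemma Vmat_eq (G : SimpleGraph (Fin n)) : Vmat G = walkMat G * U0 G := by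
  ext i j
  rw [Matrix.mul_apply]
  have hc : ∑ k : Fin n, walkMat G i k * U0 G k j
      = ∑ kk ∈ range n, ((adjMat G ^ kk) *ᵥ (fun _ => (1:ℤ))) i *
          (if kk = (j:ℕ) then 1 else if kk < (j:ℕ) then aa G ((j:ℕ)-1-kk) else 0) := by
    rw [← Fin.sum_univ_eq_sum_range]
    exact Finset.sum_congr rfl fun k _ => rfl
  rw [hc, helper_upper n (j:ℕ) j.isLt]
  have : Vmat G i j = vv G (j:ℕ) i := rfl
  rw [this, v_eq G (j:ℕ)]
  simp [Finset.sum_apply, Pi.smul_apply, smul_eq_mul, mul_comm]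

lemma Vmat_det (G : SimpleGraph (Fin n)) : (Vmat G).det = (walkMat G).det := by
  rw [Vmat_eq, Matrix.det_mul, U0_det, mul_one]

noncomputable def Qp (G : SimpleGraph (Fin n)) : Matrix (Fin (n+1)) (Fin (n+1)) ℤ :=
  colOp n (fun k => ss G (n - (k:ℕ)))

lemma Qp_det (G : SimpleGraph (Fin n)) : (Qp G).det = 1 := by
  apply colOp_det
  simp [ss_zero]

noncomputable def Mfin (G : SimpleGraph (Fin n)) : Matrix (Fin (n+1)) (Fin (n+1)) ℤ :=
  walkMat (joinVertex G) * Qp G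

lemma Mfin_ne (G : SimpleGraph (Fin n)) (i j : Fin (n+1)) (hj : j ≠ Fin.last n) :
    Mfin G i j = (Fin.cons (aa G (j:ℕ)) (vv G (j:ℕ)) : Fin (n+1) → ℤ) i := by
  rw [Mfin, Qp, mul_colOp_ne _ _ _ _ hj, walk_join_apply]

lemma Mfin_last (G : SimpleGraph (Fin n)) (i : Fin (n+1)) :
    Mfin G i (Fin.last n) = (Fin.cons (ttau G) (0 : Fin n → ℤ) : Fin (n+1) → ℤ) i := by
  rw [Mfin, Qp, mul_colOp_last]
  refine Fin.cases ?_ (fun i' => ?_) i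
  · rw [Fin.cons_zero]
    have hc : ∑ k : Fin (n+1), walkMat (joinVertex G) 0 k * ss G (n - (k:ℕ))
        = ∑ kk ∈ range (n+1), aa G kk * ss G (n - kk) := by
      rw [← Fin.sum_univ_eq_sum_range]
      exact Finset.sum_congr rfl fun k _ => by rw [walk_join_apply, Fin.cons_zero]
    rw [hc]
    rfl
  · rw [Fin.cons_succ]
    have hc : ∑ k : Fin (n+1), walkMat (joinVertex G) i'.succ k * ss G (n - (k:ℕ))
        = ∑ kk ∈ range (n+1), ss G (n - kk) * vv G kk i' := by
      rw [← Fin.sum_univ_eq_sum_range]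
      exact Finset.sum_congr rfl fun k _ => by rw [walk_join_apply, Fin.cons_succ]; ring
    rw [hc]
    have h0 := congrFun (sum_ss_vv G) i'
    simpa [Finset.sum_apply, Pi.smul_apply, smul_eq_mul] using h0

lemma detWjoin (G : SimpleGraph (Fin n)) :
    (walkMat (joinVertex G)).det = (-1)^n * (ttau G * (walkMat G).det) := by
  have h1 : (walkMat (joinVertex G)).det = (Mfin G).det := by
    rw [Mfin, Matrix.det_mul, Qp_det, mul_one]
  rw [h1, Matrix.det_succ_column (Mfin G) (Fin.last n)]
  rw [Finset.sum_eq_single (0 : Fin (n+1))]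
  · rw [Mfin_last]
    have hminor : (Mfin G).submatrix (Fin.succAbove 0) (Fin.succAbove (Fin.last n)) = Vmat G := by
      ext i j
      rw [Matrix.submatrix_apply, Fin.zero_succAbove, Fin.succAbove_last,
        Mfin_ne _ _ _ (ne_of_lt (Fin.castSucc_lt_last j)), Fin.cons_succ]
      rfl
    rw [hminor, Vmat_det, Fin.cons_zero]
    simp [Fin.val_last]
    ring
  · intro b _ hb
    obtain ⟨i', rfl⟩ := Fin.eq_succ_of_ne_zero hb
    rw [Mfin_last, Fin.cons_succ]
    simp
  · intro h; exact absurd (Finset.mem_univ _) h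

end WalkAux
namespace WalkAux
open Finset
variable {n : ℕ}

lemma adj_compl (G : SimpleGraph (Fin n)) :
    adjMat Gᶜ = Matrix.of (fun _ _ => (1:ℤ)) - 1 - adjMat G := by
  ext u v
  simp only [adjMat, Matrix.of_apply, Matrix.sub_apply]
  by_cases h : u = v
  · subst h
    rw [if_neg (Gᶜ.irrefl), if_neg (G.irrefl), Matrix.one_apply_eq]
    ring
  · rw [Matrix.one_apply_ne h]
    by_cases hadj : G.Adj u v
    · rw [if_neg (fun hc => ((SimpleGraph.compl_adj G u v).mp hc).2 hadj), if_pos hadj]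
      ring
    · rw [if_pos ((SimpleGraph.compl_adj G u v).mpr ⟨h, hadj⟩), if_neg hadj]
      ring

lemma AC_mulVec (G : SimpleGraph (Fin n)) (x : Fin n → ℤ) :
    adjMat Gᶜ *ᵥ x = (fun _ => ∑ i, x i) - x - adjMat G *ᵥ x := by
  rw [adj_compl, Matrix.sub_mulVec, Matrix.sub_mulVec, Matrix.one_mulVec]
  congr 1
  congr 1
  funext u
  simp [Matrix.mulVec, dotProduct]

lemma AC_vv (G : SimpleGraph (Fin n)) (j : ℕ) : adjMat Gᶜ *ᵥ vv G j
    = (fun _ => aa G j + aa G (j+1)) - vv G j - vv G (j+1) := by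
  rw [AC_mulVec]
  funext i
  simp only [Pi.sub_apply, vv_succ, Pi.add_apply, aa_succ]
  ring

noncomputable def wv (G : SimpleGraph (Fin n)) : ℕ → (Fin n → ℤ)
  | 0 => fun _ => 1
  | (m+1) => vv G (m+1) - wv G m

lemma AC_wv (G : SimpleGraph (Fin n)) (m : ℕ) :
    adjMat Gᶜ *ᵥ wv G m = (fun _ => aa G (m+1)) - vv G (m+1) := by
  induction m with
  | zero =>
      have h0 : wv G 0 = vv G 0 := by rw [wv, vv_zero]
      rw [h0, AC_vv]
      funext i
      simp only [Pi.sub_apply, Pi.add_apply, aa_zero, vv_zero]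
      ring
  | succ m ih =>
      rw [wv, Matrix.mulVec_sub, AC_vv, ih]
      funext i
      simp only [Pi.sub_apply, Pi.add_apply]
      ring

def Tm (n : ℕ) : Matrix (Fin n) (Fin n) ℤ :=
  Matrix.of fun j m => if (j:ℕ) ≤ (m:ℕ) then (-1:ℤ)^((m:ℕ)-(j:ℕ)) else 0

lemma Tm_det : (Tm n).det = 1 := by
  have ht : (Tm n).BlockTriangular id := by
    intro i j hij
    simp only [id] at hij
    simp only [Tm, Matrix.of_apply]
    rw [if_neg (by exact fun hh => absurd hij (not_lt_of_ge (Fin.le_def.mpr hh)))]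
  rw [Matrix.det_of_upperTriangular ht]
  apply Finset.prod_eq_one
  intro i _
  simp [Tm]

lemma sumE (G : SimpleGraph (Fin n)) (m : ℕ) (k : Fin n) :
    ∑ j ∈ range (m+1), (-1:ℤ)^(m-j) * vv G j k = wv G m k := by
  induction m with
  | zero => simp [wv, vv_zero]
  | succ m ih =>
      rw [Finset.sum_range_succ]
      have hcong : ∀ j ∈ range (m+1), (-1:ℤ)^(m+1-j) * vv G j k
          = -((-1:ℤ)^(m-j) * vv G j k) := by
        intro j hj
        have hj' := Finset.mem_range.mp hj
        have he : m+1-j = (m-j)+1 := by omega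
        rw [he, pow_succ]
        ring
      rw [Finset.sum_congr rfl hcong, Finset.sum_neg_distrib, ih, wv]
      simp only [Nat.sub_self, pow_zero, one_mul, Pi.sub_apply]
      ring

lemma VT_eq (G : SimpleGraph (Fin n)) :
    Vmat G * Tm n = Matrix.of (fun (k m : Fin n) => wv G (m:ℕ) k) := by
  ext k m
  rw [Matrix.mul_apply]
  have hc : ∑ j : Fin n, Vmat G k j * Tm n j m
      = ∑ jj ∈ range n, (if jj ≤ (m:ℕ) then vv G jj k * (-1:ℤ)^((m:ℕ)-jj) else 0) := by
    rw [← Fin.sum_univ_eq_sum_range]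
    refine Finset.sum_congr rfl fun j _ => ?_
    simp only [Vmat, Tm, Matrix.of_apply, mul_ite, mul_zero]
  rw [hc, helper_le n (m:ℕ) m.isLt]
  have hc2 : ∀ jj ∈ range ((m:ℕ)+1), vv G jj k * (-1:ℤ)^((m:ℕ)-jj)
      = (-1:ℤ)^((m:ℕ)-jj) * vv G jj k := fun jj _ => mul_comm _ _
  rw [Finset.sum_congr rfl hc2, sumE]
  rfl

noncomputable def Zmat (G : SimpleGraph (Fin n)) : Matrix (Fin n) (Fin n) ℤ :=
  Matrix.of fun i m => aa G ((m:ℕ)+1) - vv G ((m:ℕ)+1) i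

lemma ACVT (G : SimpleGraph (Fin n)) :
    adjMat Gᶜ * (Vmat G * Tm n) = Zmat G := by
  ext i m
  rw [VT_eq, Matrix.mul_apply]
  have hmv : ∑ k, adjMat Gᶜ i k * (Matrix.of (fun (k m : Fin n) => wv G (m:ℕ) k)) k m
      = (adjMat Gᶜ *ᵥ wv G (m:ℕ)) i := rfl
  rw [hmv, AC_wv]
  rfl

noncomputable def Rfun (G : SimpleGraph (Fin n)) (k m : ℕ) : ℤ :=
  aa G (m+1) * (if k = 0 then 1 else 0)
    - (if m+1 = n then -cc G k else if k = m+1 then 1 else 0)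
    - (if k ≤ m then aa G (m-k) else 0)

noncomputable def Rmat (G : SimpleGraph (Fin n)) : Matrix (Fin n) (Fin n) ℤ :=
  Matrix.of fun k m => Rfun G (k:ℕ) (m:ℕ)

lemma WR (G : SimpleGraph (Fin n)) : walkMat G * Rmat G = Zmat G := by
  ext i m
  rw [Matrix.mul_apply]
  have hn0 : 0 < n := m.pos
  set h : ℕ → ℤ := fun kk => ((adjMat G ^ kk) *ᵥ (fun _ => (1:ℤ))) i with hh
  have hc : ∑ k : Fin n, walkMat G i k * Rmat G k m
      = ∑ kk ∈ range n, h kk * Rfun G kk (m:ℕ) := by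
    rw [← Fin.sum_univ_eq_sum_range]
    exact Finset.sum_congr rfl fun k _ => rfl
  rw [hc]
  have hsplit : ∀ kk ∈ range n, h kk * Rfun G kk (m:ℕ)
      = (if kk = 0 then aa G ((m:ℕ)+1) * h kk else 0)
        - (h kk * (if (m:ℕ)+1 = n then -cc G kk else if kk = (m:ℕ)+1 then 1 else 0))
        - (if kk ≤ (m:ℕ) then aa G ((m:ℕ)-kk) * h kk else 0) := by
    intro kk _
    rw [Rfun]
    split_ifs <;> ring
  rw [Finset.sum_congr rfl hsplit, Finset.sum_sub_distrib, Finset.sum_sub_distrib]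
  have hS1 : ∑ kk ∈ range n, (if kk = 0 then aa G ((m:ℕ)+1) * h kk else 0)
      = aa G ((m:ℕ)+1) := by
    rw [Finset.sum_ite_eq' (range n) 0 (fun kk => aa G ((m:ℕ)+1) * h kk),
      if_pos (Finset.mem_range.mpr hn0)]
    have h0 : h 0 = 1 := by simp [hh]
    rw [h0, mul_one]
  have hS3 : ∑ kk ∈ range n, (if kk ≤ (m:ℕ) then aa G ((m:ℕ)-kk) * h kk else 0)
      = ∑ kk ∈ range ((m:ℕ)+1), aa G ((m:ℕ)-kk) * h kk := helper_le n (m:ℕ) m.isLt _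
  have hS2 : ∑ kk ∈ range n, h kk * (if (m:ℕ)+1 = n then -cc G kk else if kk = (m:ℕ)+1 then 1 else 0)
      = h ((m:ℕ)+1) := by
    by_cases hmn : (m:ℕ)+1 = n
    · simp only [if_pos hmn]
      have hneg : ∑ kk ∈ range n, h kk * (- cc G kk)
          = - ∑ kk ∈ range n, cc G kk * h kk := by
        rw [← Finset.sum_neg_distrib]
        exact Finset.sum_congr rfl fun kk _ => by ring
      rw [hneg]
      have hch := congrFun (ch_vec G) i
      simp only [Pi.neg_apply, Finset.sum_apply, Pi.smul_apply, smul_eq_mul] at hch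
      rw [hmn]
      exact hch.symm
    · simp only [if_neg hmn]
      have hcong : ∀ kk ∈ range n, h kk * (if kk = (m:ℕ)+1 then 1 else 0)
          = (if kk = (m:ℕ)+1 then h kk else 0) := by
        intro kk _; split_ifs <;> ring
      rw [Finset.sum_congr rfl hcong,
        Finset.sum_ite_eq' (range n) ((m:ℕ)+1) h,
        if_pos (Finset.mem_range.mpr (by have := m.isLt; omega))]
  rw [hS1, hS2, hS3]
  have hz : Zmat G i m = aa G ((m:ℕ)+1) - vv G ((m:ℕ)+1) i := rfl
  rw [hz, v_eq]
  simp only [Finset.sum_apply, Pi.add_apply, Pi.smul_apply, smul_eq_mul]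
  have hcong2 : ∀ k ∈ range ((m:ℕ)+1), aa G ((m:ℕ)+1-1-k) * ((adjMat G ^ k) *ᵥ (fun _ => (1:ℤ))) i
      = aa G ((m:ℕ)-k) * h k := by
    intro k _
    have e : (m:ℕ)+1-1-k = (m:ℕ)-k := by omega
    rw [e]
  rw [Finset.sum_congr rfl hcong2]
  ring

lemma detAC_detW (G : SimpleGraph (Fin n)) :
    (adjMat Gᶜ).det * (walkMat G).det = (Rmat G).det * (walkMat G).det := by
  have h1 : (adjMat Gᶜ).det * (walkMat G).det = (Zmat G).det := by
    rw [← ACVT, Matrix.det_mul, Matrix.det_mul, Tm_det, mul_one, Vmat_det]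
  have h2 : (Zmat G).det = (Rmat G).det * (walkMat G).det := by
    rw [← WR, Matrix.det_mul]
    ring
  rw [h1, h2]

end WalkAux
namespace WalkAux
open Finset

lemma Rq {N : ℕ} (G : SimpleGraph (Fin (N+1))) (k : ℕ) (hk : k < N+1) :
    ∑ m ∈ range (N+1), Rfun G k m * ss G (N - m)
      = if k = 0 then ttau G else 0 := by
  by_cases hk0 : k = 0
  · subst hk0
    rw [if_pos rfl]
    have hsplit : ∀ m ∈ range (N+1), Rfun G 0 m * ss G (N-m)
        = aa G (m+1) * ss G (N-m)
          - (if m+1 = N+1 then -cc G 0 * ss G (N-m) else 0)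
          - aa G m * ss G (N-m) := by
      intro m _
      rw [Rfun]
      simp only [Nat.sub_zero]
      split_ifs <;> first | ring1 | (exfalso; first | omega | exact ‹False› | exact ‹¬True› trivial)
    rw [Finset.sum_congr rfl hsplit, Finset.sum_sub_distrib, Finset.sum_sub_distrib]
    have hmid : ∑ m ∈ range (N+1), (if m+1 = N+1 then -cc G 0 * ss G (N-m) else 0)
        = -cc G 0 := by
      have hc2 : ∀ m ∈ range (N+1), (if m+1 = N+1 then -cc G 0 * ss G (N-m) else 0)
          = (if m = N then -cc G 0 * ss G (N-m) else 0) := by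
        intro m _; split_ifs <;> first | rfl | ring1 | (exfalso; first | omega | exact ‹False› | exact ‹¬True› trivial)
      rw [Finset.sum_congr rfl hc2, Finset.sum_ite_eq' (range (N+1)) N
        (fun m => -cc G 0 * ss G (N-m)),
        if_pos (Finset.mem_range.mpr (Nat.lt_succ_self N)), Nat.sub_self, ss_zero, mul_one]
    rw [hmid]
    have httau : ttau G = (∑ m ∈ range (N+1), aa G (m+1) * ss G (N-m)) + ss G (N+1) := by
      rw [ttau, Finset.sum_range_succ' (fun j => aa G j * ss G (N+1-j))]
      rw [aa_zero, one_mul, Nat.sub_zero]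
      congr 1
      refine Finset.sum_congr rfl fun j _ => ?_
      congr 2
      omega
    rw [httau, ss_succ, show N+1-1-N = 0 from by omega]
    ring
  · rw [if_neg hk0]
    have hk1 : 1 ≤ k := Nat.one_le_iff_ne_zero.mpr hk0
    have hsplit : ∀ m ∈ range (N+1), Rfun G k m * ss G (N-m)
        = -((if m = N then -cc G k * ss G (N-m) else 0)
            + (if m = k-1 then ss G (N-m) else 0))
          - (if k ≤ m then aa G (m-k) * ss G (N-m) else 0) := by
      intro m hm
      have hmN := Finset.mem_range.mp hm
      rw [Rfun, if_neg hk0]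
      split_ifs <;> first | ring1 | (exfalso; first | omega | exact ‹False› | exact ‹¬True› trivial)
    rw [Finset.sum_congr rfl hsplit, Finset.sum_sub_distrib, Finset.sum_neg_distrib,
      Finset.sum_add_distrib]
    rw [Finset.sum_ite_eq' (range (N+1)) N (fun m => -cc G k * ss G (N-m)),
      Finset.sum_ite_eq' (range (N+1)) (k-1) (fun m => ss G (N-m))]
    rw [if_pos (Finset.mem_range.mpr (Nat.lt_succ_self N)),
      if_pos (Finset.mem_range.mpr (by omega)), Nat.sub_self, ss_zero, mul_one]
    have h3 : ∑ m ∈ range (N+1), (if k ≤ m then aa G (m-k) * ss G (N-m) else 0)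
        = ∑ d ∈ range (N+1-k), aa G d * ss G (N-k-d) := by
      rw [helper_ge (N+1) k (fun m => aa G (m-k) * ss G (N-m)), Finset.sum_Ico_eq_sum_range]
      refine Finset.sum_congr rfl fun d _ => ?_
      congr 2 <;> omega
    rw [h3, show N-(k-1) = (N-k)+1 from by omega, ss_succ,
      show N+1-1-(N-k) = k from by omega, show N-k+1 = N+1-k from by omega]
    ring

lemma Rmat_det_succ {N : ℕ} (G : SimpleGraph (Fin (N+1))) : (Rmat G).det = ttau G := by
  have hqlast : (fun kk : Fin (N+1) => ss G (N - (kk:ℕ))) (Fin.last N) = 1 := by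
    simp [ss_zero]
  have hdet : (Rmat G * colOp N (fun kk => ss G (N - (kk:ℕ)))).det = (Rmat G).det := by
    rw [Matrix.det_mul, colOp_det _ _ hqlast, mul_one]
  rw [← hdet, Matrix.det_succ_column _ (Fin.last N)]
  rw [Finset.sum_eq_single (0 : Fin (N+1))]
  · rw [mul_colOp_last]
    have h0 : ∑ kk : Fin (N+1), Rmat G (0 : Fin (N+1)) kk * ss G (N - (kk:ℕ)) = ttau G := by
      have hr : ∑ kk : Fin (N+1), Rmat G (0 : Fin (N+1)) kk * ss G (N - (kk:ℕ))
          = ∑ m ∈ range (N+1), Rfun G 0 m * ss G (N - m) := by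
        rw [← Fin.sum_univ_eq_sum_range]
        exact Finset.sum_congr rfl fun kk _ => rfl
      rw [hr, Rq G 0 (Nat.succ_pos N), if_pos rfl]
    rw [h0]
    have hminor_eq : (Rmat G * colOp N (fun kk => ss G (N - (kk:ℕ)))).submatrix
          (Fin.succAbove 0) (Fin.succAbove (Fin.last N))
        = Matrix.of (fun (i j : Fin N) => Rfun G ((i:ℕ)+1) (j:ℕ)) := by
      ext i j
      rw [Matrix.submatrix_apply, Fin.zero_succAbove, Fin.succAbove_last,
        mul_colOp_ne _ _ _ _ (ne_of_lt (Fin.castSucc_lt_last j))]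
      rfl
    have hdiagval : ∀ i : Fin N, Rfun G ((i:ℕ)+1) (i:ℕ) = -1 := by
      intro i
      have h2 : ¬ ((i:ℕ)+1 = N+1) := by have := i.isLt; omega
      rw [Rfun, if_neg (by omega : ¬ ((i:ℕ)+1 = 0)), if_neg h2, if_pos rfl,
        if_neg (by omega : ¬ ((i:ℕ)+1 ≤ (i:ℕ)))]
      ring
    have hzeroval : ∀ i j : Fin N, (j:ℕ) < (i:ℕ) → Rfun G ((i:ℕ)+1) (j:ℕ) = 0 := by
      intro i j hij
      have h2 : ¬ ((j:ℕ)+1 = N+1) := by have := j.isLt; omega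
      rw [Rfun, if_neg (by omega : ¬ ((i:ℕ)+1 = 0)), if_neg h2,
        if_neg (by omega : ¬ ((i:ℕ)+1 = (j:ℕ)+1)),
        if_neg (by omega : ¬ ((i:ℕ)+1 ≤ (j:ℕ)))]
      ring
    have hminor : ((Rmat G * colOp N (fun kk => ss G (N - (kk:ℕ)))).submatrix
        (Fin.succAbove 0) (Fin.succAbove (Fin.last N))).det = (-1:ℤ)^N := by
      rw [hminor_eq]
      have ht : (Matrix.of (fun (i j : Fin N) => Rfun G ((i:ℕ)+1) (j:ℕ))).BlockTriangular id := by
        intro i j hij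
        exact hzeroval i j hij
      rw [Matrix.det_of_upperTriangular ht]
      have hp : ∀ i : Fin N, (Matrix.of (fun (i j : Fin N) => Rfun G ((i:ℕ)+1) (j:ℕ))) i i
          = -1 := fun i => hdiagval i
      rw [Finset.prod_congr rfl (fun i _ => hp i), Finset.prod_const, Finset.card_univ,
        Fintype.card_fin]
    rw [hminor]
    simp only [Fin.val_last, Fin.val_zero, zero_add]
    have hone : (-1:ℤ)^N * (-1:ℤ)^N = 1 := by
      rw [← pow_add]
      exact Even.neg_one_pow ⟨N, rfl⟩
    calc (-1:ℤ)^N * ttau G * (-1:ℤ)^N = ((-1:ℤ)^N * (-1:ℤ)^N) * ttau G := by ring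
    _ = ttau G := by rw [hone, one_mul]
  · intro b _ hb
    obtain ⟨i', rfl⟩ := Fin.eq_succ_of_ne_zero hb
    rw [mul_colOp_last]
    have h0 : ∑ kk : Fin (N+1), Rmat G i'.succ kk * ss G (N - (kk:ℕ)) = 0 := by
      have hr : ∑ kk : Fin (N+1), Rmat G i'.succ kk * ss G (N - (kk:ℕ))
          = ∑ m ∈ range (N+1), Rfun G ((i':ℕ)+1) m * ss G (N - m) := by
        rw [← Fin.sum_univ_eq_sum_range]
        exact Finset.sum_congr rfl fun kk _ => rfl
      rw [hr, Rq G ((i':ℕ)+1) (by have := i'.isLt; omega),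
        if_neg (by omega : ¬ ((i':ℕ)+1 = 0))]
    rw [h0, mul_zero, zero_mul]
  · intro h; exact absurd (Finset.mem_univ _) h

lemma Rmat_det {n : ℕ} (G : SimpleGraph (Fin n)) : (Rmat G).det = ttau G := by
  revert G
  cases n with
  | zero =>
      intro G
      rw [Matrix.det_fin_zero, ttau]
      simp [aa_zero, ss_zero]
  | succ N =>
      intro G
      exact Rmat_det_succ G

end WalkAux
/-- |det(W(G ∨ w))| = |det(Ā)| · |det(W)|. -/
theorem abs_det_walkMat_joinVertex {n : ℕ} (G : SimpleGraph (Fin n)) :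
    |(walkMat (joinVertex G)).det| = |(adjMat Gᶜ).det| * |(walkMat G).det| := by
  have hA := WalkAux.detWjoin G
  have habs : |(walkMat (joinVertex G)).det| = |WalkAux.ttau G| * |(walkMat G).det| := by
    rw [hA, abs_mul, abs_mul, abs_pow, abs_neg, abs_one, one_pow, one_mul]
  rw [habs]
  by_cases hW : (walkMat G).det = 0
  · rw [hW]
    simp
  · have hdet : (adjMat Gᶜ).det = WalkAux.ttau G := by
      have h1 := WalkAux.detAC_detW G
      rw [WalkAux.Rmat_det G] at h1
      exact mul_right_cancel₀ hW h1
    rw [hdet]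
end

section
/- Let G be a simple graph on n vertices with walk matrix W, let Ḡ be its complement with adjacency matrix Ā, and let G ∨ w be the graph on n+1 vertices obtained from G by adding a new vertex w adjacent to every vertex of G. If the vertices of G ∨ w are ordered with w first, followed by the vertices of G in their original order, then det(W(G ∨ w)) = (−1)^n · det(Ā) · det(W). -/
open Matrix

section AuxWalk

open Matrix Finset

variable {n : ℕ}

/-- Entry of `B^j e` at the apex vertex. -/
noncomputable def aSeq (G : SimpleGraph (Fin n)) (j : ℕ) : ℤ :=
  ((adjMat (joinVertex G)) ^ j *ᵥ fun _ => (1 : ℤ)) 0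

/-- Entries of `B^j e` at the old vertices. -/
noncomputable def vSeq (G : SimpleGraph (Fin n)) (j : ℕ) : Fin n → ℤ :=
  fun i => ((adjMat (joinVertex G)) ^ j *ᵥ fun _ => (1 : ℤ)) i.succ

lemma join_zero_zero (G : SimpleGraph (Fin n)) : adjMat (joinVertex G) 0 0 = 0 := by
  simp [adjMat, (joinVertex G).loopless.irrefl 0]

lemma join_zero_succ (G : SimpleGraph (Fin n)) (i : Fin n) :
    adjMat (joinVertex G) 0 i.succ = 1 := by
  have h : (joinVertex G).Adj 0 i.succ := Or.inl ⟨rfl, Fin.succ_ne_zero i⟩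
  simp [adjMat, h]

lemma join_succ_zero (G : SimpleGraph (Fin n)) (i : Fin n) :
    adjMat (joinVertex G) i.succ 0 = 1 := by
  have h : (joinVertex G).Adj i.succ 0 := Or.inr (Or.inl ⟨rfl, Fin.succ_ne_zero i⟩)
  simp [adjMat, h]

lemma join_succ_succ (G : SimpleGraph (Fin n)) (i j : Fin n) :
    adjMat (joinVertex G) i.succ j.succ = adjMat G i j := by
  have h : (joinVertex G).Adj i.succ j.succ ↔ G.Adj i j := by
    constructor
    · rintro (⟨h1, -⟩ | ⟨h1, -⟩ | ⟨a, b, ha, hb, h⟩)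
      · exact absurd h1 (Fin.succ_ne_zero i)
      · exact absurd h1 (Fin.succ_ne_zero j)
      · obtain rfl := Fin.succ_inj.mp ha
        obtain rfl := Fin.succ_inj.mp hb
        exact h
    · exact fun h => Or.inr (Or.inr ⟨i, j, rfl, rfl, h⟩)
  classical
  simp only [adjMat, Matrix.of_apply]
  by_cases hG : G.Adj i j
  · rw [if_pos (h.mpr hG), if_pos hG]
  · rw [if_neg (fun hc => hG (h.mp hc)), if_neg hG]

lemma mulVec_join_zero (G : SimpleGraph (Fin n)) (x : Fin (n + 1) → ℤ) :
    (adjMat (joinVertex G) *ᵥ x) 0 = ∑ i : Fin n, x i.succ := by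
  simp only [mulVec, dotProduct]
  rw [Fin.sum_univ_succ]
  simp [join_zero_zero, join_zero_succ]

lemma mulVec_join_succ (G : SimpleGraph (Fin n)) (x : Fin (n + 1) → ℤ) (i : Fin n) :
    (adjMat (joinVertex G) *ᵥ x) i.succ = x 0 + (adjMat G *ᵥ fun k => x k.succ) i := by
  simp only [mulVec, dotProduct]
  rw [Fin.sum_univ_succ]
  simp [join_succ_zero, join_succ_succ]

lemma aSeq_succ (G : SimpleGraph (Fin n)) (j : ℕ) :
    aSeq G (j + 1) = ∑ i : Fin n, vSeq G j i := by
  unfold aSeq vSeq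
  rw [pow_succ', ← mulVec_mulVec, mulVec_join_zero]

lemma vSeq_succ (G : SimpleGraph (Fin n)) (j : ℕ) (i : Fin n) :
    vSeq G (j + 1) i = aSeq G j + (adjMat G *ᵥ vSeq G j) i := by
  unfold aSeq vSeq
  rw [pow_succ', ← mulVec_mulVec, mulVec_join_succ]

lemma vSeq_closed (G : SimpleGraph (Fin n)) (j : ℕ) :
    vSeq G j = ((adjMat G) ^ j *ᵥ fun _ => (1 : ℤ))
      + ∑ k ∈ Finset.range j, aSeq G (j - k - 1) • ((adjMat G) ^ k *ᵥ fun _ => (1 : ℤ)) := by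
  induction j with
  | zero =>
      funext i
      simp [vSeq]
  | succ j ih =>
      funext i
      rw [vSeq_succ, ih]
      rw [mulVec_add]
      rw [show (adjMat G *ᵥ ((adjMat G) ^ j *ᵥ fun _ => (1 : ℤ)))
            = (adjMat G) ^ (j + 1) *ᵥ fun _ => (1 : ℤ) by
          rw [mulVec_mulVec, ← pow_succ']]
      rw [show (adjMat G *ᵥ ∑ k ∈ Finset.range j,
              aSeq G (j - k - 1) • ((adjMat G) ^ k *ᵥ fun _ => (1 : ℤ)))
            = ∑ k ∈ Finset.range j,
              aSeq G (j - k - 1) • ((adjMat G) ^ (k + 1) *ᵥ fun _ => (1 : ℤ)) by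
          rw [← mulVecLin_apply, map_sum]
          refine Finset.sum_congr rfl fun k _ => ?_
          rw [_root_.map_smul, mulVecLin_apply, mulVec_mulVec, ← pow_succ']]
      rw [Finset.sum_range_succ' (fun k => aSeq G (j + 1 - k - 1) •
            ((adjMat G) ^ k *ᵥ fun _ => (1 : ℤ)))]
      have h0 : (fun (_ : Fin n) => aSeq G j) =
          aSeq G (j + 1 - 0 - 1) • ((adjMat G) ^ 0 *ᵥ fun _ => (1 : ℤ)) := by
        funext k; simp
      have hcong : ∀ k ∈ Finset.range j,
          aSeq G (j - k - 1) • ((adjMat G) ^ (k + 1) *ᵥ fun _ => (1 : ℤ))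
          = aSeq G (j + 1 - (k + 1) - 1) • ((adjMat G) ^ (k + 1) *ᵥ fun _ => (1 : ℤ)) := by
        intro k _
        congr 2
        omega
      rw [Finset.sum_congr rfl hcong] at *
      simp only [Pi.add_apply, Pi.smul_apply, Finset.sum_apply]
      have := congrFun h0 i
      simp only [Pi.smul_apply] at this
      rw [← this]
      ring

lemma mulVec_compl (G : SimpleGraph (Fin n)) (x : Fin n → ℤ) (i : Fin n) :
    (adjMat Gᶜ *ᵥ x) i = (∑ k, x k) - x i - (adjMat G *ᵥ x) i := by
  classical
  simp only [mulVec, dotProduct]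
  have h : ∀ k, adjMat Gᶜ i k * x k
      = x k - (if i = k then x k else 0) - adjMat G i k * x k := by
    intro k
    by_cases hik : i = k
    · subst hik
      simp [adjMat, G.loopless.irrefl i, (Gᶜ).loopless.irrefl i]
    · by_cases hG : G.Adj i k
      · have hc : ¬ Gᶜ.Adj i k := by simp [SimpleGraph.compl_adj, hG]
        simp [adjMat, hG, hc, hik]
      · have hc : Gᶜ.Adj i k := ⟨hik, hG⟩
        simp [adjMat, hG, hc, hik]
  rw [Finset.sum_congr rfl (fun k _ => h k), Finset.sum_sub_distrib,
    Finset.sum_sub_distrib, Finset.sum_ite_eq]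
  simp

lemma compl_vSeq (G : SimpleGraph (Fin n)) (j : ℕ) (i : Fin n) :
    -((adjMat Gᶜ *ᵥ vSeq G j) i)
      = vSeq G (j + 1) i + vSeq G j i - (aSeq G (j + 1) + aSeq G j) := by
  rw [mulVec_compl, ← aSeq_succ, vSeq_succ]
  ring

/-- Unimodular matrix recording the combination of walk vectors of `G`. -/
noncomputable def Tmat (G : SimpleGraph (Fin n)) : Matrix (Fin n) (Fin n) ℤ :=
  Matrix.of fun k j => if k = j then 1 else
    if (k : ℕ) < (j : ℕ) then aSeq G ((j : ℕ) - (k : ℕ) - 1) else 0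

lemma Tmat_det (G : SimpleGraph (Fin n)) : (Tmat G).det = 1 := by
  have hT : (Tmat G).BlockTriangular id := by
    intro i j hij
    have hij' : (j : ℕ) < (i : ℕ) := hij
    have h1 : i ≠ j := fun h => by subst h; omega
    have h2 : ¬ (i : ℕ) < (j : ℕ) := by omega
    have h2f : ¬ i < j := fun h => h2 (Fin.lt_def.mp h)
    simp [Tmat, h1, h2, h2f]
  rw [Matrix.det_of_upperTriangular hT]
  exact Finset.prod_eq_one fun i _ => by simp [Tmat]

lemma walkMat_mul_Tmat (G : SimpleGraph (Fin n)) :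
    walkMat G * Tmat G = Matrix.of fun (i j : Fin n) => vSeq G (j : ℕ) i := by
  ext i j
  simp only [Matrix.mul_apply, Matrix.of_apply]
  have hv := congrFun (vSeq_closed G (j : ℕ)) i
  simp only [Pi.add_apply, Finset.sum_apply, Pi.smul_apply, smul_eq_mul] at hv
  rw [hv]
  have hterm : ∀ k : Fin n, walkMat G i k * Tmat G k j
      = (if k = j then ((adjMat G ^ (j : ℕ)) *ᵥ fun _ => (1 : ℤ)) i else 0)
        + (if (k : ℕ) < (j : ℕ) then
            aSeq G ((j : ℕ) - (k : ℕ) - 1) * ((adjMat G ^ (k : ℕ)) *ᵥ fun _ => (1 : ℤ)) i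
          else 0) := by
    intro k
    simp only [walkMat, Tmat, Matrix.of_apply]
    by_cases h1 : k = j
    · subst h1; simp
    · rw [if_neg h1]
      by_cases h3 : (k : ℕ) < (j : ℕ)
      · rw [if_pos h3, if_neg h1, if_pos h3, mul_comm, zero_add]
      · rw [if_neg h3, if_neg h1, if_neg h3, mul_zero, zero_add]
  rw [Finset.sum_congr rfl (fun k _ => hterm k), Finset.sum_add_distrib,
    Finset.sum_ite_eq']
  have hsum : (∑ k : Fin n, if (k : ℕ) < (j : ℕ) then
        aSeq G ((j : ℕ) - (k : ℕ) - 1) * ((adjMat G ^ (k : ℕ)) *ᵥ fun _ => (1 : ℤ)) i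
      else 0)
      = ∑ m ∈ Finset.range (j : ℕ),
        aSeq G ((j : ℕ) - m - 1) * ((adjMat G ^ m) *ᵥ fun _ => (1 : ℤ)) i := by
    rw [Fin.sum_univ_eq_sum_range (fun m => if m < (j : ℕ) then
        aSeq G ((j : ℕ) - m - 1) * ((adjMat G ^ m) *ᵥ fun _ => (1 : ℤ)) i else 0)]
    rw [← Finset.sum_subset (Finset.range_subset_range.mpr (le_of_lt j.isLt))
      (fun m _ hm => by rw [if_neg (by simpa using hm)])]
    exact Finset.sum_congr rfl fun m hm => if_pos (Finset.mem_range.mp hm)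
  rw [hsum]
  simp

/-- Unimodular matrix of column operations on the walk matrix of the join. -/
noncomputable def Umat (G : SimpleGraph (Fin n)) : Matrix (Fin (n + 1)) (Fin (n + 1)) ℤ :=
  Matrix.of fun k c =>
    Fin.cases (if k = 0 then 1 else 0)
      (fun j => (if k = j.succ then 1 else 0) + (if k = j.castSucc then 1 else 0)
        + (if k = 0 then -(aSeq G ((j : ℕ) + 1) + aSeq G (j : ℕ)) else 0)) c

lemma Umat_det (G : SimpleGraph (Fin n)) : (Umat G).det = 1 := by
  have hU : (Umat G).BlockTriangular id := by
    intro i j hij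
    have hij' : (j : ℕ) < (i : ℕ) := hij
    rcases Fin.eq_zero_or_eq_succ j with rfl | ⟨c, rfl⟩
    · have h0 : i ≠ 0 := Fin.ne_of_val_ne (by simp at hij' ⊢; omega)
      simp [Umat, h0]
    · have hv : (c : ℕ) + 1 < (i : ℕ) := by simpa [Fin.val_succ] using hij'
      have h1 : i ≠ c.succ := Fin.ne_of_val_ne (by simp [Fin.val_succ]; omega)
      have h2 : i ≠ c.castSucc := Fin.ne_of_val_ne (by simp [Fin.coe_castSucc]; omega)
      have h3 : i ≠ 0 := by rintro rfl; simp at hv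
      simp [Umat, h1, h2, h3]
  rw [Matrix.det_of_upperTriangular hU]
  refine Finset.prod_eq_one fun i _ => ?_
  rcases Fin.eq_zero_or_eq_succ i with rfl | ⟨c, rfl⟩
  · simp [Umat]
  · have h1 : c.succ ≠ c.castSucc := Fin.ne_of_val_ne
      (by simp [Fin.val_succ, Fin.coe_castSucc])
    simp [Umat, h1, Fin.succ_ne_zero]

/-- The result of the column operations. -/
noncomputable def Wp (G : SimpleGraph (Fin n)) : Matrix (Fin (n + 1)) (Fin (n + 1)) ℤ :=
  Matrix.of fun i c =>
    Fin.cases (1 : ℤ)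
      (fun j => Fin.cases (0 : ℤ) (fun i' => -((adjMat Gᶜ *ᵥ vSeq G (j : ℕ)) i')) i) c

lemma walkMat_join_apply_zero (G : SimpleGraph (Fin n)) (i : Fin (n + 1)) :
    walkMat (joinVertex G) i 0 = 1 := by
  simp [walkMat]

lemma walkMat_join_mul_Umat (G : SimpleGraph (Fin n)) :
    walkMat (joinVertex G) * Umat G = Wp G := by
  ext i c
  rcases Fin.eq_zero_or_eq_succ c with rfl | ⟨j, rfl⟩
  · simp only [Matrix.mul_apply, Umat, Wp, Matrix.of_apply, Fin.cases_zero,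
      mul_ite, mul_one, mul_zero, Finset.sum_ite_eq', Finset.mem_univ, if_true]
    exact walkMat_join_apply_zero G i
  · simp only [Matrix.mul_apply, Umat, Wp, Matrix.of_apply, Fin.cases_succ,
      mul_add, mul_ite, mul_one, mul_zero, Finset.sum_add_distrib,
      Finset.sum_ite_eq', Finset.mem_univ, if_true]
    rw [walkMat_join_apply_zero]
    have hs : walkMat (joinVertex G) i j.succ
        = ((adjMat (joinVertex G)) ^ ((j : ℕ) + 1) *ᵥ fun _ => (1 : ℤ)) i := by
      simp [walkMat, Fin.val_succ]
    have hc : walkMat (joinVertex G) i j.castSucc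
        = ((adjMat (joinVertex G)) ^ (j : ℕ) *ᵥ fun _ => (1 : ℤ)) i := by
      simp [walkMat, Fin.coe_castSucc]
    rw [hs, hc]
    rcases Fin.eq_zero_or_eq_succ i with rfl | ⟨i', rfl⟩
    · show aSeq G ((j : ℕ) + 1) + aSeq G (j : ℕ) + _ = _
      simp only [Fin.cases_zero]
      ring
    · show vSeq G ((j : ℕ) + 1) i' + vSeq G (j : ℕ) i' + _ = _
      simp only [Fin.cases_succ]
      rw [compl_vSeq]
      ring

lemma Wp_det (G : SimpleGraph (Fin n)) :
    (Wp G).det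
      = (-(adjMat Gᶜ * Matrix.of fun (i j : Fin n) => vSeq G (j : ℕ) i) :
        Matrix (Fin n) (Fin n) ℤ).det := by
  rw [Matrix.det_succ_row_zero, Finset.sum_eq_single 0]
  · have h00 : Wp G 0 0 = 1 := by simp [Wp]
    rw [h00, Fin.succAbove_zero]
    simp only [Fin.val_zero, pow_zero, one_mul, mul_one]
    have hsub : (Wp G).submatrix Fin.succ Fin.succ
        = -(adjMat Gᶜ * Matrix.of fun (i j : Fin n) => vSeq G (j : ℕ) i) := by
      ext i' j'
      simp [Wp, Matrix.submatrix_apply, Matrix.mul_apply, Matrix.mulVec, dotProduct,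
        Matrix.neg_apply]
    rw [hsub]
  · intro j _ hj
    obtain ⟨j', rfl⟩ := Fin.eq_succ_of_ne_zero hj
    have h0j : Wp G 0 j'.succ = 0 := by simp [Wp]
    rw [h0j]
    ring
  · intro h
    exact absurd (Finset.mem_univ _) h

end AuxWalk


/-- with the new vertex `w` listed first,
det(W(G ∨ w)) = (−1)^n · det(Ā) · det(W). -/
theorem det_walkMat_joinVertex {n : ℕ} (G : SimpleGraph (Fin n)) :
    (walkMat (joinVertex G)).det = (-1 : ℤ) ^ n * (adjMat Gᶜ).det * (walkMat G).det := by
  classical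
  have h1 : (walkMat (joinVertex G)).det = (Wp G).det := by
    rw [← walkMat_join_mul_Umat, Matrix.det_mul, Umat_det, mul_one]
  have h2 : (Matrix.of fun (i j : Fin n) => vSeq G (j : ℕ) i :
      Matrix (Fin n) (Fin n) ℤ).det = (walkMat G).det := by
    rw [← walkMat_mul_Tmat, Matrix.det_mul, Tmat_det, mul_one]
  rw [h1, Wp_det, Matrix.det_neg, Matrix.det_mul, Fintype.card_fin, h2]
  ring
end

section
/- Let H be a simple graph with adjacency matrix A(H), and let K = (H ∪ w) ∨ u be the graph obtained from H by first adding an isolated vertex w and then adding a further vertex u adjacent to all vertices of H ∪ w. Then det(A(K)) = − det(A(H)). -/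
open Matrix

section Aux
variable {n : ℕ} (H : SimpleGraph (Fin n))

private lemma adjK_01 : (joinVertex (unionVertex H)).Adj 0 ((0 : Fin (n+1)).succ) :=
  Or.inl ⟨rfl, Fin.succ_ne_zero _⟩

private lemma adjK_0b (b : Fin n) :
    (joinVertex (unionVertex H)).Adj 0 b.succ.succ :=
  Or.inl ⟨rfl, Fin.succ_ne_zero _⟩

private lemma adjK_1b (b : Fin n) :
    ¬ (joinVertex (unionVertex H)).Adj ((0 : Fin (n+1)).succ) b.succ.succ := by
  rintro (⟨h, -⟩ | ⟨h, -⟩ | ⟨i, j, hi, hj, c, d, hc, hd, -⟩)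
  · exact Fin.succ_ne_zero _ h
  · exact Fin.succ_ne_zero _ h
  · obtain rfl : i = 0 := Fin.succ_inj.mp hi.symm
    exact Fin.succ_ne_zero c hc.symm

private lemma adjK_ab (a b : Fin n) :
    (joinVertex (unionVertex H)).Adj a.succ.succ b.succ.succ ↔ H.Adj a b := by
  constructor
  · rintro (⟨h, -⟩ | ⟨h, -⟩ | ⟨i, j, hi, hj, c, d, hc, hd, hH⟩)
    · exact absurd h (Fin.succ_ne_zero _)
    · exact absurd h (Fin.succ_ne_zero _)
    · obtain rfl : i = a.succ := Fin.succ_inj.mp hi.symm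
      obtain rfl : j = b.succ := Fin.succ_inj.mp hj.symm
      obtain rfl : c = a := Fin.succ_inj.mp hc.symm
      obtain rfl : d = b := Fin.succ_inj.mp hd.symm
      exact hH
  · intro h
    exact Or.inr (Or.inr ⟨a.succ, b.succ, rfl, rfl, a, b, rfl, rfl, h⟩)

end Aux

/-- for `K = (H ∪ w) ∨ u`, det(A(K)) = − det(A(H)). -/
theorem det_adjMat_join_union {n : ℕ} (H : SimpleGraph (Fin n)) :
    (adjMat (joinVertex (unionVertex H))).det = - (adjMat H).det := by
  classical
  set K := joinVertex (unionVertex H) with hK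
  let e : Fin 2 ⊕ Fin n ≃ Fin (n + 2) := finSumFinEquiv.trans (finCongr (Nat.add_comm 2 n))
  have he0 : e (Sum.inl 0) = (0 : Fin (n + 2)) := by
    apply Fin.ext; simp [e]
  have he1 : e (Sum.inl 1) = ((0 : Fin (n + 1)).succ : Fin (n + 2)) := by
    apply Fin.ext; simp [e]
  have he2 : ∀ a : Fin n, e (Sum.inr a) = a.succ.succ := by
    intro a; apply Fin.ext; simp [e]
  let A2 : Matrix (Fin 2) (Fin 2) ℤ := !![0, 1; 1, 0]
  let B12 : Matrix (Fin 2) (Fin n) ℤ := Matrix.of fun i _ => if i = 0 then 1 else 0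
  let C21 : Matrix (Fin n) (Fin 2) ℤ := Matrix.of fun _ j => if j = 0 then 1 else 0
  have hblock : (adjMat K).submatrix e e = Matrix.fromBlocks A2 B12 C21 (adjMat H) := by
    ext x y
    rcases x with i | a <;> rcases y with j | b
    · fin_cases i <;> fin_cases j <;>
        simp only [Matrix.submatrix_apply, Fin.mk_zero, Fin.mk_one, Fin.isValue, he0, he1,
          Matrix.fromBlocks_apply₁₁, adjMat, Matrix.of_apply, hK]
      · rw [if_neg ((joinVertex (unionVertex H)).irrefl)]; simp [A2]
      · rw [if_pos (adjK_01 H)]; simp [A2]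
      · rw [if_pos ((adjK_01 H).symm)]; simp [A2]
      · rw [if_neg ((joinVertex (unionVertex H)).irrefl)]; simp [A2]
    · fin_cases i <;>
        simp only [Matrix.submatrix_apply, Fin.mk_zero, Fin.mk_one, Fin.isValue, he0, he1, he2,
          Matrix.fromBlocks_apply₁₂, adjMat, Matrix.of_apply, hK]
      · rw [if_pos (adjK_0b H b)]; simp [B12]
      · rw [if_neg (adjK_1b H b)]; simp [B12]
    · fin_cases j <;>
        simp only [Matrix.submatrix_apply, Fin.mk_zero, Fin.mk_one, Fin.isValue, he0, he1, he2,
          Matrix.fromBlocks_apply₂₁, adjMat, Matrix.of_apply, hK]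
      · rw [if_pos ((adjK_0b H a).symm)]; simp [C21]
      · rw [if_neg (fun h => adjK_1b H a h.symm)]; simp [C21]
    · simp only [Matrix.submatrix_apply, he2, Matrix.fromBlocks_apply₂₂, adjMat,
        Matrix.of_apply, hK, adjK_ab H a b]
  have hA2 : A2 * A2 = 1 := by
    ext i j; fin_cases i <;> fin_cases j <;>
      simp [A2, Matrix.mul_apply, Fin.sum_univ_two]
  haveI : Invertible A2 := invertibleOfRightInverse A2 A2 hA2
  have hinv : ⅟A2 = A2 := invOf_eq_right_inv hA2
  have hdet : (adjMat K).det = ((adjMat K).submatrix e e).det :=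
    (Matrix.det_submatrix_equiv_self e _).symm
  rw [hdet, hblock, Matrix.det_fromBlocks₁₁, hinv]
  have hzero : C21 * A2 * B12 = 0 := by
    ext i j
    simp [C21, A2, B12, Matrix.mul_apply, Fin.sum_univ_two]
  rw [hzero, sub_zero]
  have : A2.det = -1 := by simp [A2, Matrix.det_fin_two_of]
  rw [this, neg_one_mul]
end
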